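/- Let u : ℝ → ℝ² be C¹ and 2π-periodic with ∫_{−π}^{π} u(t) dt = 0. Then ∫_{−π}^{π} |u(t)|² dt ≤ ∫_{−π}^{π} |u'(t)|² dt. Moreover, equality holds if and only if there exist constant vectors c₁, c₂ ∈ ℝ² such that u(t) = c₁ cos t + c₂ sin t for all t. -/

import Mathlib

open Real Set MeasureTheory

/-- Squared Euclidean norm of a vector in `ℝ²`. -/
noncomputable def sq2 (v : Fin 2 → ℝ) : ℝ := v 0 ^ 2 + v 1 ^ 2

open Complex intervalIntegral


noncomputable def fc (g : ℝ → ℂ) (n : ℤ) : ℂ :=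
  fourierCoeffOn (by linarith [Real.two_pi_pos] : (-π : ℝ) < -π + 2*π) g n

lemma fc_deriv (f : ℝ → ℂ) (hf : ContDiff ℝ 1 f) (hper : ∀ t, f (t + 2*π) = f t) (n : ℤ) :
    fc (deriv f) n = (Complex.I * n) * fc f n := by
  have hT := Real.two_pi_pos
  have hb : (-π : ℝ) < -π + 2*π := by linarith
  have hd : ∀ t, HasDerivAt f (deriv f t) t :=
    fun t => ((hf.differentiable one_ne_zero) t).hasDerivAt
  have hdc : Continuous (deriv f) := hf.continuous_deriv le_rfl
  have hfb : f (-π + 2*π) - f (-π) = 0 := by rw [hper (-π)]; ring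
  rcases eq_or_ne n 0 with rfl | hn
  · simp only [Int.cast_zero, mul_zero, zero_mul]
    rw [fc, fourierCoeffOn_eq_integral]
    simp only [neg_zero, fourier_zero, one_smul]
    rw [integral_deriv_eq_sub (fun x _ => (hf.differentiable one_ne_zero) x)
      (hdc.intervalIntegrable _ _)]
    rw [hper (-π)]
    simp
  · have h := fourierCoeffOn_of_hasDerivAt hb hn (fun x _ => hd x) (hdc.intervalIntegrable _ _)
    rw [hfb] at h
    have h2π : ((-π + 2*π : ℝ) - (-π) : ℝ) = 2*π := by ring
    rw [h2π] at h
    have hπ : (π : ℂ) ≠ 0 := Complex.ofReal_ne_zero.mpr Real.pi_ne_zero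
    have hnc : (n : ℂ) ≠ 0 := Int.cast_ne_zero.mpr hn
    have hI : Complex.I ≠ 0 := Complex.I_ne_zero
    rw [fc, fc]
    rw [h]
    push_cast
    field_simp
    ring

lemma fc_parseval (g : ℝ → ℂ) (hg : Continuous g) (hper : ∀ t, g (t + 2*π) = g t) :
    Summable (fun n : ℤ => ‖fc g n‖^2) ∧
    (∫ t in (-π)..(-π+2*π), ‖g t‖^2) = (2*π) * ∑' n : ℤ, ‖fc g n‖^2 := by
  haveI hT : Fact (0 < 2*π) := ⟨Real.two_pi_pos⟩
  set F : C(AddCircle (2*π), ℂ) :=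
    ⟨AddCircle.liftIco (2*π) (-π) g,
      AddCircle.liftIco_continuous (by rw [hper (-π)]) hg.continuousOn⟩ with hF
  have hFc : ∀ n : ℤ, fourierCoeff (F : AddCircle (2*π) → ℂ) n = fc g n := by
    intro n
    exact fourierCoeff_liftIco_eq g n
  set Flp : Lp ℂ 2 (@AddCircle.haarAddCircle (2*π) hT) :=
    ContinuousMap.toLp (E := ℂ) 2 AddCircle.haarAddCircle ℂ F with hFlp
  have hFlpc : ∀ n : ℤ, fourierCoeff (Flp : AddCircle (2*π) → ℂ) n = fc g n := by
    intro n; rw [← hFc n]; exact fourierCoeff_toLp F n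
  constructor
  · have hmem := ((@fourierBasis (2*π) hT).repr Flp).property
    have h2 : (0:ℝ) < (2 : ENNReal).toReal := by norm_num
    have hs := (memℓp_gen_iff h2).mp hmem
    have : (fun n : ℤ => ‖(@fourierBasis (2*π) hT).repr Flp n‖ ^ (2 : ENNReal).toReal)
        = fun n : ℤ => ‖fc g n‖^2 := by
      funext n
      rw [fourierBasis_repr, hFlpc n]
      rw [show ((2:ENNReal).toReal) = ((2:ℕ):ℝ) by norm_num, Real.rpow_natCast]
    rwa [this] at hs
  · have hpars := tsum_sq_fourierCoeff Flp
    have h1 : (∑' n : ℤ, ‖fourierCoeff (Flp : AddCircle (2*π) → ℂ) n‖^2)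
        = ∑' n : ℤ, ‖fc g n‖^2 := by
      congr 1; funext n; rw [hFlpc n]
    have h2 : ∫ t : AddCircle (2*π), ‖Flp t‖^2 ∂AddCircle.haarAddCircle
        = ∫ t : AddCircle (2*π), ‖F t‖^2 ∂AddCircle.haarAddCircle := by
      apply MeasureTheory.integral_congr_ae
      filter_upwards [ContinuousMap.coeFn_toLp (p := 2) AddCircle.haarAddCircle (𝕜 := ℂ) F]
        with t ht
      rw [ht]
    have h3 : (∫ t in (-π)..(-π+2*π), ‖g t‖^2)
        = ∫ t in (-π)..(-π+2*π), ‖F (t : AddCircle (2*π))‖^2 := by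
      have hle : (-π : ℝ) ≤ -π + 2*π := by linarith [Real.two_pi_pos]
      rw [intervalIntegral.integral_of_le hle, intervalIntegral.integral_of_le hle,
        integral_Ioc_eq_integral_Ioo, integral_Ioc_eq_integral_Ioo]
      apply MeasureTheory.setIntegral_congr_fun measurableSet_Ioo
      intro t ht
      simp only [hF, ContinuousMap.coe_mk]
      rw [AddCircle.liftIco_coe_apply (Set.mem_Ico.mpr ⟨le_of_lt ht.1, ht.2⟩)]
    have h4 := AddCircle.intervalIntegral_preimage (2*π) (-π)
      (fun x : AddCircle (2*π) => ‖F x‖^2)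
    have h5 : (∫ x : AddCircle (2*π), ‖F x‖^2)
        = (2*π) * ∫ x : AddCircle (2*π), ‖F x‖^2 ∂AddCircle.haarAddCircle := by
      rw [AddCircle.volume_eq_smul_haarAddCircle, MeasureTheory.integral_smul_measure,
        ENNReal.toReal_ofReal Real.two_pi_pos.le, smul_eq_mul]
    rw [h3, h4, h5, ← h1, hpars, h2]

set_option maxHeartbeats 1000000 in
lemma fc_recover (g : ℝ → ℂ) (hg : Continuous g) (hper : ∀ t, g (t + 2*π) = g t)
    (h0 : ∀ n : ℤ, n ≠ 1 → n ≠ -1 → fc g n = 0) (t : ℝ) :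
    g t = fc g 1 * Complex.exp (Complex.I * t)
        + fc g (-1) * Complex.exp (-(Complex.I * t)) := by
  haveI hT : Fact (0 < 2*π) := ⟨Real.two_pi_pos⟩
  set F : C(AddCircle (2*π), ℂ) :=
    ⟨AddCircle.liftIco (2*π) (-π) g,
      AddCircle.liftIco_continuous (by rw [hper (-π)]) hg.continuousOn⟩ with hF
  have hFc : ∀ n : ℤ, fourierCoeff (F : AddCircle (2*π) → ℂ) n = fc g n := by
    intro n; exact fourierCoeff_liftIco_eq g n
  have hvan : ∀ n : ℤ, n ∉ ({1, -1} : Finset ℤ) → fourierCoeff (F : AddCircle (2*π) → ℂ) n = 0 := by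
    intro n hn
    simp only [Finset.mem_insert, Finset.mem_singleton] at hn
    push_neg at hn
    rw [hFc]; exact h0 n hn.1 hn.2
  have hsum : Summable (fourierCoeff (F : AddCircle (2*π) → ℂ)) :=
    summable_of_ne_finset_zero hvan
  have key : ∀ x : AddCircle (2*π),
      F x = fc g 1 • fourier 1 x + fc g (-1) • fourier (-1) x := by
    intro x
    have h := has_pointwise_sum_fourier_series_of_summable hsum x
    have h2 : HasSum (fun i : ℤ => fourierCoeff (F : AddCircle (2*π) → ℂ) i • fourier i x)
        (∑ i ∈ ({1, -1} : Finset ℤ), fourierCoeff (F : AddCircle (2*π) → ℂ) i • fourier i x) :=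
      hasSum_sum_of_ne_finset_zero (by intro n hn; rw [hvan n hn, zero_smul])
    have := h.unique h2
    rw [this, Finset.sum_pair (by decide : (1:ℤ) ≠ -1), hFc, hFc]
  -- reduce t to the fundamental domain
  set τ := toIcoMod Real.two_pi_pos (-π) t with hτ
  have hτmem := toIcoMod_mem_Ico Real.two_pi_pos (-π) t
  have hgt : g τ = g t := by
    rw [hτ, ← self_sub_toIcoDiv_zsmul Real.two_pi_pos (-π) t]
    exact (Function.Periodic.sub_zsmul_eq hper _)
  have hcoe : ((τ : ℝ) : AddCircle (2*π)) = (t : AddCircle (2*π)) := by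
    rw [hτ, ← self_sub_toIcoDiv_zsmul Real.two_pi_pos (-π) t, QuotientAddGroup.mk_sub,
      QuotientAddGroup.mk_zsmul, AddCircle.coe_period, smul_zero, sub_zero]
  have hFt : F ((t : ℝ) : AddCircle (2*π)) = g t := by
    rw [← hcoe]
    have : F ((τ : ℝ) : AddCircle (2*π)) = g τ := by
      simp only [hF, ContinuousMap.coe_mk]
      exact AddCircle.liftIco_coe_apply hτmem
    rw [this, hgt]
  have hf1 : (fourier 1 ((t : ℝ) : AddCircle (2*π)) : ℂ) = Complex.exp (Complex.I * t) := by
    rw [fourier_coe_apply]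
    congr 1
    have : (π : ℂ) ≠ 0 := Complex.ofReal_ne_zero.mpr Real.pi_ne_zero
    push_cast
    field_simp
  have hf2 : (fourier (-1) ((t : ℝ) : AddCircle (2*π)) : ℂ) = Complex.exp (-(Complex.I * t)) := by
    rw [fourier_coe_apply]
    congr 1
    have : (π : ℂ) ≠ 0 := Complex.ofReal_ne_zero.mpr Real.pi_ne_zero
    push_cast
    field_simp
  rw [← hFt, key, hf1, hf2, smul_eq_mul, smul_eq_mul]

lemma norm_sq_fc_deriv (f : ℝ → ℂ) (hf : ContDiff ℝ 1 f) (hper : ∀ t, f (t + 2*π) = f t)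
    (n : ℤ) : ‖fc (deriv f) n‖^2 = (n:ℝ)^2 * ‖fc f n‖^2 := by
  rw [fc_deriv f hf hper n]
  rw [norm_mul, norm_mul, Complex.norm_I, one_mul, mul_pow]
  norm_num

lemma key_complex (f : ℝ → ℂ) (hf : ContDiff ℝ 1 f) (hper : ∀ t, f (t + 2*π) = f t)
    (havg : (∫ t in (-π)..π, f t) = 0) :
    (∫ t in (-π)..π, ‖f t‖^2) ≤ (∫ t in (-π)..π, ‖deriv f t‖^2) ∧
    ((∫ t in (-π)..π, ‖f t‖^2) = (∫ t in (-π)..π, ‖deriv f t‖^2) →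
      ∀ t : ℝ, f t = fc f 1 * Complex.exp (Complex.I * t)
        + fc f (-1) * Complex.exp (-(Complex.I * t))) := by
  have hb : (π : ℝ) = -π + 2*π := by ring
  have hgper : ∀ t, deriv f (t + 2*π) = deriv f t := by
    intro t
    rw [← deriv_comp_add_const f (2*π) t]
    congr 1
    funext x
    exact hper x
  have hgc : Continuous (deriv f) := hf.continuous_deriv le_rfl
  obtain ⟨hS1, hP1⟩ := fc_parseval f hf.continuous hper
  obtain ⟨hS2, hP2⟩ := fc_parseval (deriv f) hgc hgper
  have hc0 : fc f 0 = 0 := by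
    rw [fc, fourierCoeffOn_eq_integral]
    simp only [neg_zero, fourier_zero, one_smul]
    rw [← hb, havg, smul_zero]
  have hterm : ∀ n : ℤ, ‖fc (deriv f) n‖^2 = (n:ℝ)^2 * ‖fc f n‖^2 :=
    norm_sq_fc_deriv f hf hper
  have hle : ∀ n : ℤ, ‖fc f n‖^2 ≤ ‖fc (deriv f) n‖^2 := by
    intro n
    rw [hterm n]
    rcases eq_or_ne n 0 with rfl | hn
    · rw [hc0]; norm_num
    · have h1 : (1:ℝ) ≤ (n:ℝ)^2 := by
        have h : (1:ℤ) ≤ n^2 := by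
          rcases lt_or_gt_of_ne hn with h | h <;> nlinarith
        exact_mod_cast h
      nlinarith [sq_nonneg ‖fc f n‖]
  have hI1 := hP1
  rw [← hb] at hI1
  have hI2 := hP2
  rw [← hb] at hI2
  have htsum_le : (∑' n : ℤ, ‖fc f n‖^2) ≤ ∑' n : ℤ, ‖fc (deriv f) n‖^2 :=
    Summable.tsum_le_tsum hle hS1 hS2
  constructor
  · rw [hI1, hI2]
    have := Real.two_pi_pos
    nlinarith
  · intro heq
    have htsum_eq : (∑' n : ℤ, ‖fc f n‖^2) = ∑' n : ℤ, ‖fc (deriv f) n‖^2 := by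
      rw [hI1, hI2] at heq
      have := Real.two_pi_pos
      have h2 : (2*π) ≠ 0 := by positivity
      exact mul_left_cancel₀ h2 heq
    -- the difference series is summable, nonneg, with zero sum
    have hdiff : Summable (fun n : ℤ => ‖fc (deriv f) n‖^2 - ‖fc f n‖^2) := hS2.sub hS1
    have hdiff_sum : (∑' n : ℤ, (‖fc (deriv f) n‖^2 - ‖fc f n‖^2)) = 0 := by
      rw [Summable.tsum_sub hS2 hS1, htsum_eq, sub_self]
    have hvanish : ∀ n : ℤ, n ≠ 1 → n ≠ -1 → fc f n = 0 := by
      intro n hn1 hn2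
      rcases eq_or_ne n 0 with rfl | hn0
      · exact hc0
      · have hnonneg : ∀ m : ℤ, 0 ≤ ‖fc (deriv f) m‖^2 - ‖fc f m‖^2 :=
          fun m => sub_nonneg.mpr (hle m)
        have hterm_le := Summable.le_tsum hdiff n (fun m _ => hnonneg m)
        rw [hdiff_sum] at hterm_le
        have hzero : ‖fc (deriv f) n‖^2 - ‖fc f n‖^2 = 0 :=
          le_antisymm hterm_le (hnonneg n)
        rw [hterm n] at hzero
        have h2 : ((n:ℝ)^2 - 1) * ‖fc f n‖^2 = 0 := by linear_combination hzero
        have h4n : (4:ℤ) ≤ n^2 := by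
          have : 2 ≤ n ∨ n ≤ -2 := by omega
          rcases this with h | h <;> nlinarith
        have h4r : (4:ℝ) ≤ (n:ℝ)^2 := by exact_mod_cast h4n
        have h3 : (n:ℝ)^2 - 1 ≠ 0 := by intro hcon; linarith
        have h4 : ‖fc f n‖^2 = 0 := by
          rcases mul_eq_zero.mp h2 with h | h
          · exact absurd h h3
          · exact h
        have := pow_eq_zero_iff (n := 2) (by norm_num) |>.mp h4
        simpa using this
    exact fc_recover f hf.continuous hper hvanish

noncomputable def phi : (Fin 2 → ℝ) →L[ℝ] ℂ :=
  Complex.ofRealCLM.comp (ContinuousLinearMap.proj 0) +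
  (ContinuousLinearMap.proj (R := ℝ) (φ := fun _ : Fin 2 => ℝ) 1).smulRight Complex.I

lemma phi_apply (v : Fin 2 → ℝ) : phi v = (v 0 : ℂ) + (v 1 : ℂ) * Complex.I := by
  simp [phi, ContinuousLinearMap.smulRight_apply, Complex.real_smul]

lemma phi_re (v : Fin 2 → ℝ) : (phi v).re = v 0 := by
  simp [phi_apply]

lemma phi_im (v : Fin 2 → ℝ) : (phi v).im = v 1 := by
  simp [phi_apply]

lemma norm_phi (v : Fin 2 → ℝ) : ‖phi v‖^2 = sq2 v := by
  rw [Complex.sq_norm, Complex.normSq_apply, phi_re, phi_im, sq2]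
  ring

/-- **Sharp Poincaré–Wirtinger inequality** for null-average `2π`-periodic
`ℝ²`-valued functions, with characterization of the equality case. -/
theorem poincare_wirtinger_sharp
    (u : ℝ → Fin 2 → ℝ)
    (hu : ContDiff ℝ 1 u)
    (hper : ∀ t : ℝ, u (t + 2 * π) = u t)
    (havg : (∫ t in (-π)..π, u t) = 0) :
    (∫ t in (-π)..π, sq2 (u t)) ≤ (∫ t in (-π)..π, sq2 (deriv u t)) ∧
    ((∫ t in (-π)..π, sq2 (u t)) = (∫ t in (-π)..π, sq2 (deriv u t)) ↔
      ∃ c₁ c₂ : Fin 2 → ℝ, ∀ t : ℝ,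
        u t = fun i => c₁ i * Real.cos t + c₂ i * Real.sin t) := by
  set f : ℝ → ℂ := fun t => phi (u t) with hfdef
  have hud : Differentiable ℝ u := hu.differentiable one_ne_zero
  have hfC : ContDiff ℝ 1 f := phi.contDiff.comp hu
  have hderiv_f : ∀ t, deriv f t = phi (deriv u t) := fun t =>
    (phi.hasFDerivAt.comp_hasDerivAt t (hud t).hasDerivAt).deriv
  have hfper : ∀ t, f (t + 2*π) = f t := fun t => by rw [hfdef]; simp only; rw [hper t]
  have hfavg : (∫ t in (-π)..π, f t) = 0 := by
    rw [hfdef]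
    rw [ContinuousLinearMap.intervalIntegral_comp_comm phi
      (hu.continuous.intervalIntegrable _ _)]
    rw [havg, map_zero]
  have e1 : (∫ t in (-π)..π, sq2 (u t)) = ∫ t in (-π)..π, ‖f t‖^2 := by
    apply intervalIntegral.integral_congr
    intro t _
    rw [hfdef]; simp only; rw [norm_phi]
  have e2 : (∫ t in (-π)..π, sq2 (deriv u t)) = ∫ t in (-π)..π, ‖deriv f t‖^2 := by
    apply intervalIntegral.integral_congr
    intro t _
    show sq2 (deriv u t) = ‖deriv f t‖^2
    rw [hderiv_f t, norm_phi]
  obtain ⟨hineq, hforward⟩ := key_complex f hfC hfper hfavg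
  constructor
  · rw [e1, e2]; exact hineq
  constructor
  · -- forward: equality implies trig form
    intro heq
    rw [e1, e2] at heq
    have hrep := hforward heq
    set γ := fc f 1 with hγ
    set δ := fc f (-1) with hδ
    refine ⟨![γ.re + δ.re, γ.im + δ.im], ![δ.im - γ.im, γ.re - δ.re], fun t => ?_⟩
    funext i
    have h := hrep t
    have hre := congrArg Complex.re h
    have him := congrArg Complex.im h
    have hfre : (f t).re = u t 0 := phi_re (u t)
    have hfim : (f t).im = u t 1 := phi_im (u t)
    simp only [Complex.add_re, Complex.add_im, Complex.mul_re, Complex.mul_im,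
      Complex.exp_re, Complex.exp_im, Complex.neg_re, Complex.neg_im,
      Complex.mul_re, Complex.mul_im, Complex.I_re, Complex.I_im,
      Complex.ofReal_re, Complex.ofReal_im, Real.exp_zero] at hre him
    rw [hfre] at hre
    rw [hfim] at him
    norm_num [Real.exp_zero, Real.cos_neg, Real.sin_neg] at hre him
    fin_cases i <;>
      simp only [Fin.mk_zero, Fin.mk_one, Fin.isValue, Matrix.cons_val_zero,
        Matrix.cons_val_one, Matrix.head_cons] <;>
      [rw [hre]; rw [him]] <;> ring
  · -- backward: trig form implies equality
    rintro ⟨c₁, c₂, hue⟩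
    have hd : ∀ t, deriv u t = fun i => -c₁ i * Real.sin t + c₂ i * Real.cos t := by
      intro t
      have : HasDerivAt u (fun i => -c₁ i * Real.sin t + c₂ i * Real.cos t) t := by
        rw [hasDerivAt_pi]
        intro i
        have hcomp : (fun s => u s i) = fun s => c₁ i * Real.cos s + c₂ i * Real.sin s := by
          funext s; rw [hue s]
        rw [hcomp]
        have h1 := (Real.hasDerivAt_cos t).const_mul (c₁ i)
        have h2 := (Real.hasDerivAt_sin t).const_mul (c₂ i)
        convert h1.add h2 using 1
        · rfl
        · ring
      exact this.deriv
    have hintegrand : ∀ t, sq2 (u t) - sq2 (deriv u t)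
        = ((c₁ 0^2 - c₂ 0^2) + (c₁ 1^2 - c₂ 1^2)) * Real.cos (2*t)
          + (2*(c₁ 0 * c₂ 0) + 2*(c₁ 1 * c₂ 1)) * Real.sin (2*t) := by
      intro t
      rw [hue t, hd t]
      simp only [sq2]
      rw [Real.sin_two_mul, Real.cos_two_mul]
      have hpyth := Real.sin_sq_add_cos_sq t
      linear_combination (c₂ 0^2 + c₂ 1^2 - c₁ 0^2 - c₁ 1^2) * hpyth
    have hcos2 : (∫ t in (-π)..π, Real.cos (2*t)) = 0 := by
      have := intervalIntegral.integral_comp_mul_left (a := -π) (b := π) Real.cos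
        (c := 2) (by norm_num)
      rw [this, integral_cos]
      rw [show (2:ℝ) * π = 2*π by ring]
      rw [show (2:ℝ) * -π = -(2*π) by ring]
      rw [Real.sin_neg, Real.sin_two_pi]
      norm_num
    have hsin2 : (∫ t in (-π)..π, Real.sin (2*t)) = 0 := by
      have := intervalIntegral.integral_comp_mul_left (a := -π) (b := π) Real.sin
        (c := 2) (by norm_num)
      rw [this, integral_sin]
      rw [show (2:ℝ) * π = 2*π by ring]
      rw [show (2:ℝ) * -π = -(2*π) by ring]
      rw [Real.cos_neg]
      norm_num
    have hc1 : Continuous fun t => sq2 (u t) := by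
      simp only [sq2]
      exact (((continuous_apply 0).comp hu.continuous).pow 2).add
        (((continuous_apply 1).comp hu.continuous).pow 2)
    have hc2 : Continuous fun t => sq2 (deriv u t) := by
      have hdc : Continuous (deriv u) := hu.continuous_deriv le_rfl
      simp only [sq2]
      exact (((continuous_apply 0).comp hdc).pow 2).add
        (((continuous_apply 1).comp hdc).pow 2)
    have hzero : (∫ t in (-π)..π, (sq2 (u t) - sq2 (deriv u t))) = 0 := by
      rw [intervalIntegral.integral_congr (g := fun t =>
        ((c₁ 0^2 - c₂ 0^2) + (c₁ 1^2 - c₂ 1^2)) * Real.cos (2*t)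
          + (2*(c₁ 0 * c₂ 0) + 2*(c₁ 1 * c₂ 1)) * Real.sin (2*t))
        (fun t _ => hintegrand t)]
      have hcc : Continuous fun t : ℝ => Real.cos (2*t) :=
        Real.continuous_cos.comp (continuous_const.mul continuous_id)
      have hss : Continuous fun t : ℝ => Real.sin (2*t) :=
        Real.continuous_sin.comp (continuous_const.mul continuous_id)
      rw [intervalIntegral.integral_add
        (f := fun t => ((c₁ 0^2 - c₂ 0^2) + (c₁ 1^2 - c₂ 1^2)) * Real.cos (2*t))
        (g := fun t => (2*(c₁ 0 * c₂ 0) + 2*(c₁ 1 * c₂ 1)) * Real.sin (2*t))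
        ((continuous_const.mul hcc).intervalIntegrable _ _)
        ((continuous_const.mul hss).intervalIntegrable _ _)]
      rw [intervalIntegral.integral_const_mul, intervalIntegral.integral_const_mul]
      have hc2' : (∫ t in (-π)..π, Real.cos (2*t)) = 0 := hcos2
      have hs2' : (∫ t in (-π)..π, Real.sin (2*t)) = 0 := hsin2
      rw [hc2', hs2']
      ring
    have hsub : (∫ t in (-π)..π, (sq2 (u t) - sq2 (deriv u t)))
        = (∫ t in (-π)..π, sq2 (u t)) - (∫ t in (-π)..π, sq2 (deriv u t)) :=
      intervalIntegral.integral_sub (hc1.intervalIntegrable (-π) π)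
        (hc2.intervalIntegrable (-π) π)
    rw [hsub] at hzero
    linarith
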